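/- Let γ_s < 0, A = Id on a Hilbert space H_s, ε > 0, C > 0, and let F : (-∞,0] → H_s be measurable with ‖F(s)‖ ≤ C for all s. Then for the mild solution X(t) = e^{εAt}X₀ + ε∫_0^t e^{εA(t-s)}F(s)ds (with ‖e^{At}x‖ ≤ e^{-γ_s t}‖x‖ for t ≤ 0), there exists a constant C' (depending on ‖AX₀‖, C, γ_s but not on ε or t) such that ‖X(t) - X₀‖ ≤ C'(1 - e^{-γ_s ε t}) for all t ≤ 0. -/

import Mathlib

open Real MeasureTheory

lemma key_exp_bound (a u : ℝ) (ha : 0 < a) (hu : u ≤ 0) :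
    1 - Real.exp u ≤ max 1 (1/a) * (1 - Real.exp (a*u)) := by
  have hau : Real.exp (a*u) ≤ 1 := Real.exp_le_one_iff.mpr (by nlinarith)
  rcases le_total a 1 with h | h
  · have hconv := convexOn_exp.2 (Set.mem_univ u) (Set.mem_univ (0:ℝ)) ha.le
      (by linarith : (0:ℝ) ≤ 1 - a) (by ring)
    simp only [smul_eq_mul, mul_zero, add_zero, Real.exp_zero, mul_one] at hconv
    have h2 : a * (1 - Real.exp u) ≤ 1 - Real.exp (a*u) := by nlinarith
    have h3 : 1 - Real.exp u ≤ (1/a) * (1 - Real.exp (a*u)) := by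
      rw [div_mul_eq_mul_div, le_div_iff₀ ha]
      nlinarith
    calc 1 - Real.exp u ≤ (1/a) * (1 - Real.exp (a*u)) := h3
      _ ≤ max 1 (1/a) * (1 - Real.exp (a*u)) :=
        mul_le_mul_of_nonneg_right (le_max_right _ _) (by linarith)
  · have h2 : Real.exp (a*u) ≤ Real.exp u := Real.exp_le_exp.mpr (by nlinarith)
    have hK : (1:ℝ) ≤ max 1 (1/a) := le_max_left _ _
    nlinarith [Real.exp_pos u]

/-- A-priori estimate for the scaled slow variable: with `A = Id` (so `e^{At}x = e^t x`),
semigroup bound `‖e^t x‖ ≤ e^{-γ_s t}‖x‖` for `t ≤ 0`, and `‖F(s)‖ ≤ C`, the mild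
solution `X(t) = e^{εt}X₀ + ε∫_0^t e^{ε(t-s)}F(s)ds` satisfies
`‖X(t) - X₀‖ ≤ C'(1 - e^{-γ_s ε t})` for all `t ≤ 0`, where `C'` does not depend on
`ε` or `t`. -/
theorem stmt12 {H : Type*} [NormedAddCommGroup H] [InnerProductSpace ℝ H]
    [CompleteSpace H] [MeasurableSpace H] [BorelSpace H]
    (γs C : ℝ) (hγs : γs < 0) (hC : 0 < C) (X₀ : H)
    (hsem : ∀ t ≤ (0:ℝ), ∀ x : H, ‖Real.exp t • x‖ ≤ Real.exp (-γs * t) * ‖x‖) :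
    ∃ C' > (0:ℝ), ∀ ε : ℝ, 0 < ε → ∀ F : ℝ → H, Measurable F →
      (∀ s ≤ (0:ℝ), ‖F s‖ ≤ C) → ∀ t ≤ (0:ℝ),
        ‖(Real.exp (ε*t) • X₀
            + ε • ∫ s in (0:ℝ)..t, Real.exp (ε*(t-s)) • F s) - X₀‖
          ≤ C' * (1 - Real.exp (-γs * ε * t)) := by
  have ha : 0 < -γs := by linarith
  set K := max 1 (1/(-γs)) with hKdef
  have hK1 : (1:ℝ) ≤ K := le_max_left _ _
  refine ⟨(‖X₀‖ + C) * K, by positivity, ?_⟩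
  intro ε hε F hFmeas hFbound t ht
  have hu : ε * t ≤ 0 := mul_nonpos_of_nonneg_of_nonpos hε.le ht
  have hexp1 : Real.exp (ε*t) ≤ 1 := Real.exp_le_one_iff.mpr hu
  -- compute the scalar integral
  have hcalc : ∫ s in t..(0:ℝ), Real.exp (ε*(t-s)) = (1 - Real.exp (ε*t)) / ε := by
    have hderiv : ∀ x ∈ Set.uIcc t (0:ℝ),
        HasDerivAt (fun s => -(ε⁻¹) * Real.exp (ε*(t-s))) (Real.exp (ε*(t-x))) x := by
      intro x _
      have h1 : HasDerivAt (fun s : ℝ => ε*(t-s)) (-ε) x := by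
        simpa using ((hasDerivAt_id x).const_sub t).const_mul ε
      have h2 := (Real.hasDerivAt_exp (ε*(t-x))).comp x h1
      have h3 := h2.const_mul (-(ε⁻¹))
      refine h3.congr_deriv ?_
      field_simp
    have hint : IntervalIntegrable (fun s => Real.exp (ε*(t-s))) volume t 0 := by
      apply Continuous.intervalIntegrable
      continuity
    rw [intervalIntegral.integral_eq_sub_of_hasDerivAt hderiv hint]
    simp only [sub_zero, sub_self, mul_zero, Real.exp_zero, mul_one]
    field_simp
    ring
  -- bound on the vector integral
  have hIbound : ‖∫ s in (0:ℝ)..t, Real.exp (ε*(t-s)) • F s‖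
      ≤ C * (1 - Real.exp (ε*t)) / ε := by
    rw [intervalIntegral.integral_symm, norm_neg]
    have hle : ‖∫ s in t..(0:ℝ), Real.exp (ε*(t-s)) • F s‖
        ≤ |∫ s in t..(0:ℝ), C * Real.exp (ε*(t-s))| := by
      apply intervalIntegral.norm_integral_le_abs_of_norm_le
      · filter_upwards [ae_restrict_mem measurableSet_uIoc] with s hs
        have hs0 : s ≤ 0 := hs.2.trans (max_le ht le_rfl)
        rw [norm_smul, Real.norm_eq_abs, abs_of_pos (Real.exp_pos _), mul_comm C]
        exact mul_le_mul_of_nonneg_left (hFbound s hs0) (Real.exp_pos _).le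
      · apply Continuous.intervalIntegrable
        continuity
    rw [intervalIntegral.integral_const_mul, hcalc] at hle
    have h0 : (0:ℝ) ≤ 1 - Real.exp (ε*t) := by linarith
    rwa [abs_of_nonneg (by positivity : (0:ℝ) ≤ C * ((1 - Real.exp (ε*t)) / ε)),
      ← mul_div_assoc] at hle
  -- put everything together
  have key : ‖(Real.exp (ε*t) • X₀
      + ε • ∫ s in (0:ℝ)..t, Real.exp (ε*(t-s)) • F s) - X₀‖
      ≤ (‖X₀‖ + C) * (1 - Real.exp (ε*t)) := by
    have heq : (Real.exp (ε*t) • X₀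
        + ε • ∫ s in (0:ℝ)..t, Real.exp (ε*(t-s)) • F s) - X₀
        = (Real.exp (ε*t) - 1) • X₀
          + ε • ∫ s in (0:ℝ)..t, Real.exp (ε*(t-s)) • F s := by
      rw [sub_smul, one_smul]; abel
    rw [heq]
    refine (norm_add_le _ _).trans ?_
    rw [norm_smul, norm_smul, Real.norm_eq_abs, Real.norm_eq_abs,
      abs_of_nonneg hε.le, abs_of_nonpos (by linarith : Real.exp (ε*t) - 1 ≤ 0)]
    have h2 : ε * ‖∫ s in (0:ℝ)..t, Real.exp (ε*(t-s)) • F s‖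
        ≤ ε * (C * (1 - Real.exp (ε*t)) / ε) :=
      mul_le_mul_of_nonneg_left hIbound hε.le
    have h2' : ε * (C * (1 - Real.exp (ε*t)) / ε) = C * (1 - Real.exp (ε*t)) := by
      field_simp
    rw [h2'] at h2
    nlinarith [norm_nonneg X₀]
  refine key.trans ?_
  have hkey := key_exp_bound (-γs) (ε*t) ha hu
  have harg : -γs * (ε*t) = -γs * ε * t := by ring
  rw [harg] at hkey
  have hX0C : (0:ℝ) ≤ ‖X₀‖ + C := by positivity
  calc (‖X₀‖ + C) * (1 - Real.exp (ε*t))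
      ≤ (‖X₀‖ + C) * (K * (1 - Real.exp (-γs * ε * t))) :=
        mul_le_mul_of_nonneg_left hkey hX0C
    _ = (‖X₀‖ + C) * K * (1 - Real.exp (-γs * ε * t)) := by ring
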